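/- For any commutative ring A and any two GE₂-unimodular vectors u, v ∈ A², there exists a finite sequence u = w₀, w₁, …, wₙ = v of GE₂-unimodular vectors in A² such that for each i < n, either the 2×2 matrix with columns wᵢ and wᵢ₊₁ lies in GE₂(A), or wᵢ₊₁ = c·wᵢ for some unit c ∈ A^×. (Equivalently, the complex of GE₂-unimodular vectors Y₁(A²) → Y₀(A²) → ℤ → 0 is exact, i.e. H₀(Y_•(A²)) ≅ ℤ.) -/

import Mathlib

open Matrix

variable (A : Type*) [CommRing A]

/-- The elementary matrix `E₁₂(a) = [[1,a],[0,1]]` as an element of `GL₂(A)`. -/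
def E12 (a : A) : GL (Fin 2) A :=
  ⟨!![1, a; 0, 1], !![1, -a; 0, 1],
    by rw [Matrix.mul_fin_two, Matrix.one_fin_two]; ring_nf,
    by rw [Matrix.mul_fin_two, Matrix.one_fin_two]; ring_nf⟩

/-- The elementary matrix `E₂₁(a) = [[1,0],[a,1]]` as an element of `GL₂(A)`. -/
def E21 (a : A) : GL (Fin 2) A :=
  ⟨!![1, 0; a, 1], !![1, 0; -a, 1],
    by rw [Matrix.mul_fin_two, Matrix.one_fin_two]; ring_nf,
    by rw [Matrix.mul_fin_two, Matrix.one_fin_two]; ring_nf⟩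

/-- `E₂(A)`: the subgroup of `GL₂(A)` generated by the elementary matrices. -/
def EE2 : Subgroup (GL (Fin 2) A) :=
  Subgroup.closure (Set.range (E12 A) ∪ Set.range (E21 A))

/-- `GE₂(A)`: the subgroup of `GL₂(A)` generated by the elementary and the
invertible diagonal matrices. -/
def GE2 : Subgroup (GL (Fin 2) A) :=
  Subgroup.closure (Set.range (E12 A) ∪ Set.range (E21 A) ∪
    {g : GL (Fin 2) A | ∃ u v : Aˣ, (g : Matrix (Fin 2) (Fin 2) A) = !![(u : A), 0; 0, (v : A)]})

/-- `D(u) = diag(u, u⁻¹)` as an element of `GL₂(A)`. -/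
def DU (u : Aˣ) : GL (Fin 2) A :=
  ⟨!![(u : A), 0; 0, ((u⁻¹ : Aˣ) : A)], !![((u⁻¹ : Aˣ) : A), 0; 0, (u : A)],
    by rw [Matrix.mul_fin_two, Matrix.one_fin_two]; simp,
    by rw [Matrix.mul_fin_two, Matrix.one_fin_two]; simp⟩

/-- `w = [[0,1],[-1,0]]` as an element of `GL₂(A)`. -/
def wU : GL (Fin 2) A :=
  ⟨!![0, 1; -1, 0], !![0, -1; 1, 0],
    by rw [Matrix.mul_fin_two, Matrix.one_fin_two]; ring_nf,
    by rw [Matrix.mul_fin_two, Matrix.one_fin_two]; ring_nf⟩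

/-- `g_z = [[0,1],[-1,z]]` as an element of `GL₂(A)`. -/
def gU (z : A) : GL (Fin 2) A :=
  ⟨!![0, 1; -1, z], !![z, -1; 1, 0],
    by rw [Matrix.mul_fin_two, Matrix.one_fin_two]; ring_nf,
    by rw [Matrix.mul_fin_two, Matrix.one_fin_two]; ring_nf⟩

/-- `h_z = [[1,z⁻¹],[0,1]]` as an element of `GL₂(A)`, for a unit `z`. -/
def hU (z : Aˣ) : GL (Fin 2) A := E12 A ((z⁻¹ : Aˣ) : A)

variable {A}

lemma E12_mem (a : A) : E12 A a ∈ EE2 A :=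
  Subgroup.subset_closure (Or.inl ⟨a, rfl⟩)

lemma E21_mem (a : A) : E21 A a ∈ EE2 A :=
  Subgroup.subset_closure (Or.inr ⟨a, rfl⟩)

lemma wU_mem : wU A ∈ EE2 A := by
  have : wU A = E12 A 1 * E21 A (-1) * E12 A 1 := by
    apply Units.ext
    show (!![0, 1; -1, 0] : Matrix (Fin 2) (Fin 2) A) =
      (!![1,1;0,1] : Matrix (Fin 2) (Fin 2) A) * !![1,0;-1,1] * !![1,1;0,1]
    rw [Matrix.mul_fin_two, Matrix.mul_fin_two]
    ext i j; fin_cases i <;> fin_cases j <;> simp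
  rw [this]
  exact mul_mem (mul_mem (E12_mem 1) (E21_mem (-1))) (E12_mem 1)

lemma gU_mem (z : A) : gU A z ∈ EE2 A := by
  have : gU A z = wU A * E12 A (-z) := by
    apply Units.ext
    show (!![0, 1; -1, z] : Matrix (Fin 2) (Fin 2) A) =
      (!![0,1;-1,0] : Matrix (Fin 2) (Fin 2) A) * !![1,-z;0,1]
    rw [Matrix.mul_fin_two]
    ext i j; fin_cases i <;> fin_cases j <;> simp
  rw [this]
  exact mul_mem wU_mem (E12_mem (-z))

lemma hU_mem (z : Aˣ) : hU A z ∈ EE2 A := E12_mem _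

lemma DU_mem (u : Aˣ) : DU A u ∈ EE2 A := by
  have : DU A u = E12 A (u : A) * E21 A (-((u⁻¹ : Aˣ) : A)) * E12 A (u : A) *
      (E12 A (-1) * E21 A 1 * E12 A (-1)) := by
    apply Units.ext
    show (!![(u : A), 0; 0, ((u⁻¹ : Aˣ) : A)] : Matrix (Fin 2) (Fin 2) A) =
      (!![1,(u:A);0,1] : Matrix (Fin 2) (Fin 2) A) * !![1,0;-((u⁻¹:Aˣ):A),1] *
      !![1,(u:A);0,1] * (!![1,-1;0,1] * !![1,0;1,1] * !![1,-1;0,1])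
    rw [Matrix.mul_fin_two, Matrix.mul_fin_two, Matrix.mul_fin_two, Matrix.mul_fin_two,
      Matrix.mul_fin_two]
    ext i j; fin_cases i <;> fin_cases j <;> simp
  rw [this]
  exact mul_mem (mul_mem (mul_mem (E12_mem _) (E21_mem _)) (E12_mem _))
    (mul_mem (mul_mem (E12_mem _) (E21_mem _)) (E12_mem _))

variable (A)

/-- The 2×2 matrix with columns `u` and `v`. -/
def colMat (u v : Fin 2 → A) : Matrix (Fin 2) (Fin 2) A := !![u 0, v 0; u 1, v 1]

/-- A 2×2 matrix "lies in `GE₂(A)`" if it is the underlying matrix of an element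
of the subgroup `GE₂(A)` of `GL₂(A)`. -/
def MatInGE2 (m : Matrix (Fin 2) (Fin 2) A) : Prop :=
  ∃ g ∈ GE2 A, (g : Matrix (Fin 2) (Fin 2) A) = m

/-- A vector `u ∈ A²` is `GE₂`-unimodular if it is the first column of (the matrix of)
an element of `GE₂(A)`. -/
def IsGE2Unimodular (u : Fin 2 → A) : Prop :=
  ∃ v : Fin 2 → A, MatInGE2 A (colMat A u v)

section Aux

namespace GE2Aux

variable {A : Type*} [CommRing A]

/-- diag(u,v) as a GL element. -/
def diagU (u v : Aˣ) : GL (Fin 2) A :=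
  ⟨!![(u : A), 0; 0, (v : A)], !![((u⁻¹ : Aˣ) : A), 0; 0, ((v⁻¹ : Aˣ) : A)],
    by rw [Matrix.mul_fin_two, Matrix.one_fin_two]; simp,
    by rw [Matrix.mul_fin_two, Matrix.one_fin_two]; simp⟩

lemma diagU_mem (u v : Aˣ) : diagU u v ∈ GE2 A :=
  Subgroup.subset_closure (Or.inr ⟨u, v, rfl⟩)

lemma EE2_le_GE2 : EE2 A ≤ GE2 A :=
  Subgroup.closure_mono (fun x hx => Or.inl hx)

lemma matMul {m m' : Matrix (Fin 2) (Fin 2) A}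
    (h : MatInGE2 A m) (h' : MatInGE2 A m') : MatInGE2 A (m * m') := by
  obtain ⟨g, hg, e⟩ := h
  obtain ⟨g', hg', e'⟩ := h'
  exact ⟨g * g', mul_mem hg hg', by rw [Units.val_mul, e, e']⟩

lemma swap_inGE2 : MatInGE2 A !![0, 1; 1, 0] := by
  refine ⟨wU A * diagU (-1) 1, mul_mem (EE2_le_GE2 wU_mem) (diagU_mem _ _), ?_⟩
  show (!![0, 1; -1, 0] : Matrix (Fin 2) (Fin 2) A) * !![((-1 : Aˣ) : A), 0; 0, ((1 : Aˣ) : A)]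
    = !![0, 1; 1, 0]
  rw [Matrix.mul_fin_two]
  norm_num

/-- The step relation: consecutive vectors form a matrix in GE₂, or differ by a unit. -/
def Step (x y : Fin 2 → A) : Prop :=
  MatInGE2 A (colMat A x y) ∨ ∃ c : Aˣ, y = fun j => (c : A) * x j

lemma colMat_swap (x y : Fin 2 → A) :
    colMat A y x = colMat A x y * !![0, 1; 1, 0] := by
  unfold colMat
  rw [Matrix.mul_fin_two]
  ring_nf

lemma Step.symm {x y : Fin 2 → A} (h : Step x y) : Step y x := by
  rcases h with h | ⟨c, hc⟩
  · exact Or.inl (by rw [colMat_swap]; exact matMul h swap_inGE2)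
  · refine Or.inr ⟨c⁻¹, funext fun j => ?_⟩
    rw [hc]; simp

lemma step_symmetric : Symmetric (Step (A := A)) := fun _ _ => Step.symm

lemma colMat_scale (x p : Fin 2 → A) (c : Aˣ) :
    colMat A (fun j => (c : A) * x j) (fun j => ((c⁻¹ : Aˣ) : A) * p j)
      = colMat A x p * !![(c : A), 0; 0, ((c⁻¹ : Aˣ) : A)] := by
  unfold colMat
  rw [Matrix.mul_fin_two]
  ring_nf

lemma Step.unimod {x y : Fin 2 → A} (h : Step x y) (hx : IsGE2Unimodular A x) :
    IsGE2Unimodular A y := by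
  rcases h with h | ⟨c, hc⟩
  · exact ⟨x, by rw [colMat_swap]; exact matMul h swap_inGE2⟩
  · obtain ⟨p, hp⟩ := hx
    refine ⟨fun j => ((c⁻¹ : Aˣ) : A) * p j, ?_⟩
    rw [hc, colMat_scale]
    exact matMul hp ⟨DU A c, EE2_le_GE2 (DU_mem c), rfl⟩

lemma colMat_mulVec (m : Matrix (Fin 2) (Fin 2) A) (x y : Fin 2 → A) :
    colMat A (m *ᵥ x) (m *ᵥ y) = m * colMat A x y := by
  ext i j
  fin_cases i <;> fin_cases j <;>
    simp [colMat, Matrix.mulVec, Matrix.mul_apply, dotProduct, Fin.sum_univ_two]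

lemma Step.map {x y : Fin 2 → A} (g : GL (Fin 2) A) (hg : g ∈ GE2 A) (h : Step x y) :
    Step ((g : Matrix (Fin 2) (Fin 2) A) *ᵥ x) ((g : Matrix (Fin 2) (Fin 2) A) *ᵥ y) := by
  rcases h with h | ⟨c, hc⟩
  · exact Or.inl (by rw [colMat_mulVec]; exact matMul ⟨g, hg, rfl⟩ h)
  · refine Or.inr ⟨c, funext fun j => ?_⟩
    rw [hc]
    have : (fun j => (c : A) * x j) = (c : A) • x := rfl
    rw [this, Matrix.mulVec_smul]
    rfl

/-- Connectedness. -/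
def Conn (x y : Fin 2 → A) : Prop := Relation.ReflTransGen Step x y

lemma Conn.map {x y : Fin 2 → A} (g : GL (Fin 2) A) (hg : g ∈ GE2 A) (h : Conn x y) :
    Conn ((g : Matrix (Fin 2) (Fin 2) A) *ᵥ x) ((g : Matrix (Fin 2) (Fin 2) A) *ᵥ y) := by
  induction h with
  | refl => exact Relation.ReflTransGen.refl
  | tail _ hs ih => exact ih.tail (hs.map g hg)

lemma Conn.symm {x y : Fin 2 → A} (h : Conn x y) : Conn y x := by
  haveI : Std.Symm (Step (A := A)) := ⟨step_symmetric⟩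
  exact Relation.ReflTransGen.symmetric.symm _ _ h

/-- e₀. -/
def e0 : Fin 2 → A := ![1, 0]

lemma conn_mulVec_e0 (g : GL (Fin 2) A) (hg : g ∈ GE2 A) :
    Conn ((g : Matrix (Fin 2) (Fin 2) A) *ᵥ e0) (e0 (A := A)) := by
  induction hg using Subgroup.closure_induction with
  | mem s hs =>
    rcases hs with (⟨a, rfl⟩ | ⟨a, rfl⟩) | ⟨a, b, hab⟩
    · have : ((E12 A a : GL (Fin 2) A) : Matrix (Fin 2) (Fin 2) A) *ᵥ e0 = e0 (A := A) := by
        funext j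
        fin_cases j <;>
          simp [E12, e0, Matrix.mulVec, dotProduct, Fin.sum_univ_two]
      rw [this]
      exact Relation.ReflTransGen.refl
    · have h1 : ((E21 A a : GL (Fin 2) A) : Matrix (Fin 2) (Fin 2) A) *ᵥ e0 = ![1, a] := by
        funext j
        fin_cases j <;>
          simp [E21, e0, Matrix.mulVec, dotProduct, Fin.sum_univ_two]
      rw [h1]
      have s1 : Step (![1, a] : Fin 2 → A) ![0, 1] := by
        refine Or.inl ⟨E21 A a, EE2_le_GE2 (E21_mem a), ?_⟩
        show (!![1, 0; a, 1] : Matrix (Fin 2) (Fin 2) A) = _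
        unfold colMat; norm_num
      have s2 : Step (![0, 1] : Fin 2 → A) e0 := by
        refine Or.inl ?_
        have : colMat A ![0, 1] e0 = !![0, 1; 1, 0] := by unfold colMat e0; norm_num
        rw [this]; exact swap_inGE2
      exact (Relation.ReflTransGen.single s1).tail s2
    · have h1 : ((s : GL (Fin 2) A) : Matrix (Fin 2) (Fin 2) A) *ᵥ e0 = ![(a : A), 0] := by
        rw [hab]
        funext j
        fin_cases j <;> simp [e0, Matrix.mulVec, dotProduct, Fin.sum_univ_two]
      rw [h1]
      refine Relation.ReflTransGen.single (Or.inr ⟨a⁻¹, funext fun j => ?_⟩)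
      fin_cases j <;> simp [e0]
  | one =>
    rw [Units.val_one, Matrix.one_mulVec]
    exact Relation.ReflTransGen.refl
  | mul x y hx hy ihx ihy =>
    have : ((x * y : GL (Fin 2) A) : Matrix (Fin 2) (Fin 2) A) *ᵥ e0
        = (x : Matrix (Fin 2) (Fin 2) A) *ᵥ ((y : Matrix (Fin 2) (Fin 2) A) *ᵥ e0) := by
      rw [Units.val_mul, Matrix.mulVec_mulVec]
    rw [this]
    exact (ihy.map x hx).trans ihx
  | inv x hx ihx =>
    have h := ihx.map x⁻¹ (inv_mem hx)
    have e : ((x⁻¹ : GL (Fin 2) A) : Matrix (Fin 2) (Fin 2) A) *ᵥ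
        ((x : Matrix (Fin 2) (Fin 2) A) *ᵥ e0) = e0 (A := A) := by
      rw [Matrix.mulVec_mulVec, ← Units.val_mul, inv_mul_cancel, Units.val_one,
        Matrix.one_mulVec]
    rw [e] at h
    exact h.symm

lemma conn_e0_of_unimodular {u : Fin 2 → A} (hu : IsGE2Unimodular A u) :
    Conn u (e0 (A := A)) := by
  obtain ⟨p, g, hg, e⟩ := hu
  have : (g : Matrix (Fin 2) (Fin 2) A) *ᵥ e0 = u := by
    rw [e]
    funext j
    fin_cases j <;> simp [colMat, e0, Matrix.mulVec, dotProduct, Fin.sum_univ_two]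
  have h := conn_mulVec_e0 g hg
  rwa [this] at h

end GE2Aux

end Aux

/-- For any two `GE₂`-unimodular vectors `u, v` there is a chain
`u = w₀, w₁, …, wₙ = v` of `GE₂`-unimodular vectors such that consecutive members either
form a matrix in `GE₂(A)` or differ by a unit scalar. -/
theorem connectedness_of_GE2_unimodular_vectors
    (u v : Fin 2 → A) (hu : IsGE2Unimodular A u) (hv : IsGE2Unimodular A v) :
    ∃ (n : ℕ) (w : Fin (n + 1) → Fin 2 → A),
      w 0 = u ∧ w (Fin.last n) = v ∧ (∀ i, IsGE2Unimodular A (w i)) ∧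
      ∀ i : Fin n,
        MatInGE2 A (colMat A (w (Fin.castSucc i)) (w i.succ)) ∨
        ∃ c : Aˣ, w i.succ = fun j => (c : A) * w (Fin.castSucc i) j := by
  classical
  have hconn : Relation.ReflTransGen GE2Aux.Step u v :=
    (GE2Aux.conn_e0_of_unimodular hu).trans (GE2Aux.conn_e0_of_unimodular hv).symm
  clear hv
  induction hconn with
  | refl =>
    exact ⟨0, fun _ => u, rfl, rfl, fun _ => hu, fun i => i.elim0⟩
  | @tail b c hbc hs ih =>
    obtain ⟨n, w, h0, hl, huni, hstep⟩ := ih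
    refine ⟨n + 1, Fin.snoc w c, ?_, ?_, ?_, ?_⟩
    · rw [show (0 : Fin (n + 2)) = Fin.castSucc 0 from rfl, Fin.snoc_castSucc]
      exact h0
    · rw [Fin.snoc_last]
    · intro i
      refine Fin.lastCases ?_ (fun j => ?_) i
      · rw [Fin.snoc_last]
        exact hs.unimod (hl ▸ huni (Fin.last n))
      · rw [Fin.snoc_castSucc]
        exact huni j
    · intro i
      refine Fin.lastCases ?_ (fun j => ?_) i
      · rw [Fin.succ_last, Fin.snoc_last, Fin.snoc_castSucc, hl]
        exact hs
      · rw [Fin.succ_castSucc, Fin.snoc_castSucc, Fin.snoc_castSucc]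
        exact hstep j
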